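/- Evolutionary stability of commitment compliance requires a budget exceeding the cost of cooperation: in the donation game (T = b, R = b − c, P = 0, S = −c with b > c > 0), for Π ∈ {Π_R, Π_P} with α = 0, any ε, and any χ ∈ [0,1), if ACD is an evolutionarily stable strategy of the noisy payoff matrix Π̃, then u > c. (If u < c then ADD strictly invades ACD; if u = c then Π̃(ADD,ACD) = Π̃(ACD,ACD) and Π̃(ACD,ADD) = Π̃(ADD,ADD), so ACD fails the ESS conditions against ADD.) -/
import Mathlib


/-- A strategy in the commitment game: whether to accept a prior commitment
(`commit = true` means "A"), the action if a commitment is formed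
(`inAct = true` means "C"), and the action if no commitment is formed
(`outAct = true` means "C"). -/
structure Strat where
  commit : Bool
  inAct : Bool
  outAct : Bool
deriving DecidableEq

def ACC : Strat := ⟨true, true, true⟩
def ACD : Strat := ⟨true, true, false⟩
def ADC : Strat := ⟨true, false, true⟩
def ADD : Strat := ⟨true, false, false⟩
def NCC : Strat := ⟨false, true, true⟩
def NCD : Strat := ⟨false, true, false⟩
def NDC : Strat := ⟨false, false, true⟩
def NDD : Strat := ⟨false, false, false⟩

/-- Row player's payoff in the one-shot Prisoner's Dilemma with payoffs
`T, R, P, S`; `true` codes cooperation. -/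
def pd (T R P S : ℝ) (myC otherC : Bool) : ℝ :=
  if myC then (if otherC then R else S) else (if otherC then T else P)

/-- The reward payoff matrix `Π_R`: the row player receives its PD payoff
(commitment formed iff both commit; then each pays `ε/2` and plays its
in-commitment action, otherwise both play their no-commitment actions),
plus `α·u` if it accepted the commitment, plus an additional `(1−α)·u`
if a commitment is formed and it cooperates in it. -/
noncomputable def payR (T R P S ε u α : ℝ) (s t : Strat) : ℝ :=
  (if s.commit ∧ t.commit then
      pd T R P S s.inAct t.inAct - ε / 2 + (if s.inAct then (1 - α) * u else 0)
   else pd T R P S s.outAct t.outAct)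
  + (if s.commit then α * u else 0)

/-- The punishment payoff matrix `Π_P`: as `Π_R` except that instead of the
reward `(1−α)·u` for compliance, the amount `(1−α)·u` is subtracted when a
commitment is formed and the row player defects in it. -/
noncomputable def payP (T R P S ε u α : ℝ) (s t : Strat) : ℝ :=
  (if s.commit ∧ t.commit then
      pd T R P S s.inAct t.inAct - ε / 2 - (if s.inAct then 0 else (1 - α) * u)
   else pd T R P S s.outAct t.outAct)
  + (if s.commit then α * u else 0)

/-- Flip the participation decision of a strategy (A ↔ N). -/
def flipPart (s : Strat) : Strat := ⟨!s.commit, s.inAct, s.outAct⟩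

/-- The noisy payoff matrix `Π̃`: with probability `χ` each player independently
errs in its decision whether to join the commitment. -/
noncomputable def noisy (χ : ℝ) (M : Strat → Strat → ℝ) (s t : Strat) : ℝ :=
  (1 - χ) ^ 2 * M s t + χ * (1 - χ) * (M (flipPart s) t + M s (flipPart t))
    + χ ^ 2 * M (flipPart s) (flipPart t)

/-- Strategy `a` is risk-dominant against strategy `b` under payoff matrix `Π`. -/
def RiskDom (M : Strat → Strat → ℝ) (a b : Strat) : Prop :=
  M a a + M a b > M b a + M b b

/-- `x` is an evolutionarily stable strategy (ESS) of the payoff matrix `Π`. -/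
def IsESS (M : Strat → Strat → ℝ) (x : Strat) : Prop :=
  ∀ y : Strat, y ≠ x → M x x > M y x ∨ (M x x = M y x ∧ M x y > M y y)

/-- **Evolutionary stability of commitment compliance requires a budget exceeding
the cost of cooperation.**
In the donation game (`T = b`, `R = b − c`, `P = 0`, `S = −c` with `b > c > 0`),
for `Π ∈ {Π_R, Π_P}` with `α = 0`, any `ε`, and any `χ ∈ [0,1)`: if ACD is an ESS
of the noisy matrix `Π̃` then `u > c`. Moreover, if `u < c` then ADD strictly
invades ACD, and if `u = c` then `Π̃(ADD,ACD) = Π̃(ACD,ACD)` and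
`Π̃(ACD,ADD) = Π̃(ADD,ADD)`, so ACD fails the ESS conditions against ADD. -/
theorem ESS_of_ACD_requires_budget (b c ε u χ : ℝ)
    (hbc : c < b) (hc : 0 < c) (hχ : 0 ≤ χ ∧ χ < 1)
    (M : Strat → Strat → ℝ)
    (hM : M = payR b (b - c) 0 (-c) ε u 0 ∨ M = payP b (b - c) 0 (-c) ε u 0) :
    (IsESS (noisy χ M) ACD → u > c) ∧
    (u < c → noisy χ M ADD ACD > noisy χ M ACD ACD) ∧
    (u = c →
      noisy χ M ADD ACD = noisy χ M ACD ACD ∧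
      noisy χ M ACD ADD = noisy χ M ADD ADD) := by
  obtain ⟨hχ0, hχ1⟩ := hχ
  have hx : (0:ℝ) < (1 - χ)^2 := by nlinarith [sq_nonneg (1 - χ)]
  have e1 : noisy χ M ADD ACD - noisy χ M ACD ACD = (1-χ)^2 * (c - u) := by
    rcases hM with rfl | rfl <;> simp [noisy, payR, payP, ACD, ADD, flipPart, pd] <;> ring
  have e2 : noisy χ M ACD ADD - noisy χ M ADD ADD = (1-χ)^2 * (u - c) := by
    rcases hM with rfl | rfl <;> simp [noisy, payR, payP, ACD, ADD, flipPart, pd] <;> ring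
  refine ⟨fun h => ?_, fun h => by nlinarith, fun h => ⟨by nlinarith, by nlinarith⟩⟩
  rcases h ADD (by decide) with h1 | ⟨h1, h2⟩
  · nlinarith
  · nlinarith
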